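/- Let U ⊆ ℂᵐ be an open set and let w₁, …, w_m : U → ℂ be functions that are continuously differentiable as maps of real variables (i.e. ℝ-Fréchet differentiable with continuous derivative, identifying ℂᵐ with ℝ^{2m}). Suppose that for every point p ∈ U and every direction a ∈ ℂᵐ, the function ξ ↦ ∑_{j=1}^{m} w_j(p + ξ·a) · a_j, defined on the open set {ξ ∈ ℂ : p + ξ·a ∈ U}, is complex differentiable. Then each w_j is complex differentiable (holomorphic) on U. -/

import Mathlib

/-- A `(1,0)`-form `ω = ∑ⱼ wⱼ dzⱼ` with `C¹` (over `ℝ`) coefficients on an open set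
`U ⊆ ℂᵐ`, whose restriction to every complex line is holomorphic, has holomorphic
coefficients. -/
theorem holomorphic_of_holomorphic_on_lines
    (m : ℕ) (U : Set (Fin m → ℂ)) (hU : IsOpen U)
    (w : Fin m → (Fin m → ℂ) → ℂ)
    (hw : ∀ j, ContDiffOn ℝ 1 (w j) U)
    (hline : ∀ p ∈ U, ∀ a : Fin m → ℂ,
      DifferentiableOn ℂ (fun ξ : ℂ => ∑ j, w j (p + ξ • a) * a j)
        {ξ : ℂ | p + ξ • a ∈ U}) :
    ∀ j, DifferentiableOn ℂ (w j) U := by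
  intro k p hp
  have hdiff : ∀ j, DifferentiableAt ℝ (w j) p := fun j =>
    (((hw j).differentiableOn one_ne_zero) p hp).differentiableAt (hU.mem_nhds hp)
  set D : Fin m → (Fin m → ℂ) →L[ℝ] ℂ := fun j => fderiv ℝ (w j) p with hDdef
  have hDj : ∀ j, HasFDerivAt (w j) (D j) p := fun j => (hdiff j).hasFDerivAt
  -- Key identity from holomorphy along lines
  have key : ∀ a : Fin m → ℂ,
      ∑ j, a j * D j (Complex.I • a) = Complex.I * ∑ j, a j * D j a := by
    intro a
    have hcont : Continuous fun ξ : ℂ => p + ξ • a := by continuity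
    have hopen : IsOpen {ξ : ℂ | p + ξ • a ∈ U} := hU.preimage hcont
    have h0 : (0:ℂ) ∈ {ξ : ℂ | p + ξ • a ∈ U} := by simp [hp]
    have hg : DifferentiableAt ℂ (fun ξ : ℂ => ∑ j, w j (p + ξ • a) * a j) 0 :=
      ((hline p hp a) 0 h0).differentiableAt (hopen.mem_nhds h0)
    obtain ⟨S, hS⟩ := hg
    have hSR := hS.restrictScalars ℝ
    set T : ℂ →L[ℝ] (Fin m → ℂ) :=
      (ContinuousLinearMap.toSpanSingleton ℂ a).restrictScalars ℝ with hTdef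
    have hφ : HasFDerivAt (fun ξ : ℂ => p + ξ • a) T 0 := by
      have h1 : HasFDerivAt (fun ξ : ℂ => ξ • a) T 0 :=
        ((ContinuousLinearMap.toSpanSingleton ℂ a).hasFDerivAt.restrictScalars ℝ)
      simpa using h1.const_add p
    have hterm : ∀ j, HasFDerivAt (fun ξ : ℂ => w j (p + ξ • a) * a j)
        (a j • ((D j).comp T)) 0 := by
      intro j
      have hp0 : p + (0:ℂ) • a = p := by simp
      have hwj : HasFDerivAt (w j) (D j) (p + (0:ℂ) • a) := by rw [hp0]; exact hDj j
      have hcomp := HasFDerivAt.comp (0:ℂ) hwj hφ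
      have hcomp' : HasFDerivAt (fun ξ : ℂ => w j (p + ξ • a)) ((D j).comp T) 0 := by
        simpa [Function.comp_def] using hcomp
      exact hcomp'.mul_const (a j)
    have hsum : HasFDerivAt (fun ξ : ℂ => ∑ j, w j (p + ξ • a) * a j)
        (∑ j, a j • ((D j).comp T)) 0 :=
      HasFDerivAt.fun_sum (fun j _ => hterm j)
    have huniq : S.restrictScalars ℝ = ∑ j, a j • ((D j).comp T) := hSR.unique hsum
    have e1 : S 1 = ∑ j, a j * D j a := by
      have h := ContinuousLinearMap.ext_iff.mp huniq 1
      simpa [hTdef, ContinuousLinearMap.toSpanSingleton_apply, smul_eq_mul] using h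
    have eI : S Complex.I = ∑ j, a j * D j (Complex.I • a) := by
      have h := ContinuousLinearMap.ext_iff.mp huniq Complex.I
      simpa [hTdef, ContinuousLinearMap.toSpanSingleton_apply, smul_eq_mul] using h
    have hSI : S Complex.I = Complex.I * S 1 := by
      have := S.map_smul Complex.I (1:ℂ)
      simpa [smul_eq_mul] using this
    rw [← eI, ← e1, hSI]
  -- the antiholomorphic defect `B` vanishes
  set B : (Fin m → ℂ) → (Fin m → ℂ) → ℂ :=
    fun a b => ∑ j, a j * (D j (Complex.I • b) - Complex.I * D j b) with hBdef
  have hQ : ∀ a, B a a = 0 := by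
    intro a
    simp only [hBdef, mul_sub]
    rw [Finset.sum_sub_distrib, key a, Finset.mul_sum, sub_eq_zero]
    exact Finset.sum_congr rfl fun j _ => by ring
  have hBadd : ∀ a b, B a b + B b a = 0 := by
    intro a b
    have hsplit : B (a+b) (a+b) = B a a + B a b + B b a + B b b := by
      simp only [hBdef]
      rw [← Finset.sum_add_distrib, ← Finset.sum_add_distrib, ← Finset.sum_add_distrib]
      exact Finset.sum_congr rfl fun j _ => by
        simp only [Pi.add_apply, smul_add, map_add]; ring
    linear_combination hQ (a+b) - hsplit - hQ a - hQ b
  have hBI : ∀ a b, B a (Complex.I • b) = -Complex.I * B a b := by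
    intro a b
    simp only [hBdef]
    rw [Finset.mul_sum]
    refine Finset.sum_congr rfl fun j _ => ?_
    have hib : Complex.I • Complex.I • b = -b := by
      rw [smul_smul, Complex.I_mul_I, neg_one_smul]
    rw [hib, map_neg]
    linear_combination (-(a j * (D j) b)) * Complex.I_sq
  have hBI' : ∀ a b, B (Complex.I • a) b = Complex.I * B a b := by
    intro a b
    simp only [hBdef, Pi.smul_apply, smul_eq_mul]
    rw [Finset.mul_sum]
    exact Finset.sum_congr rfl fun j _ => by ring
  have hB0 : ∀ a b, B a b = 0 := by
    intro a b
    have h4 := hBadd a (Complex.I • b)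
    rw [hBI a b, hBI' b a] at h4
    linear_combination (1/2 : ℂ) * hBadd a b + (Complex.I/2) * h4
      + ((B a b - B b a)/2) * Complex.I_sq
  -- hence each real derivative is `ℂ`-linear
  have hC : ∀ v, D k (Complex.I • v) = Complex.I * D k v := by
    intro v
    have h := hB0 (Pi.single k 1) v
    simp only [hBdef] at h
    rw [Finset.sum_eq_single k (fun j _ hj => by simp [Pi.single_eq_of_ne hj])
      (fun h' => absurd (Finset.mem_univ k) h')] at h
    simpa [sub_eq_zero] using h
  have hsmul : ∀ (c : ℂ) (v : Fin m → ℂ), D k (c • v) = c * D k v := by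
    intro c v
    have hdec : c • v = (c.re : ℝ) • v + (c.im : ℝ) • (Complex.I • v) := by
      rw [← Complex.coe_smul, ← Complex.coe_smul, smul_smul, ← add_smul]
      congr 1
      exact (Complex.re_add_im c).symm
    rw [hdec, map_add, map_smul, map_smul, hC]
    rw [Complex.real_smul, Complex.real_smul]
    linear_combination (D k v) * Complex.re_add_im c
  let D' : (Fin m → ℂ) →L[ℂ] ℂ :=
    { toFun := D k
      map_add' := map_add (D k)
      map_smul' := fun c v => by simpa using hsmul c v
      cont := (D k).continuous }
  have hres : D'.restrictScalars ℝ = D k := by ext v; rfl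
  exact (hasFDerivAt_of_restrictScalars ℝ (hDj k) hres).differentiableAt.differentiableWithinAt
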